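/- Let (I_k)_{k∈ℕ} be a sequence of pairwise disjoint finite subsets of ℕ with |I_k| → ∞, and let D = ⋃_k [I_k]² ⊆ ℕ × ℕ. Then the collection ℐ = {X ⊆ D : limsup_k nor_{I_k}(X ∩ [I_k]²) < ∞} (equivalently, those X with sup_k nor_{I_k}(X ∩ [I_k]²) finite) is a proper ideal on D containing all finite subsets of D: ℐ is closed under taking subsets and finite unions, every finite subset of D belongs to ℐ, and D ∉ ℐ. -/

import Mathlib

/-- `offDiagSq I = [I]² = (I × I) \ Δ`, the off-diagonal part of the square of `I`. -/
def offDiagSq (I : Set ℕ) : Set (ℕ × ℕ) := (I ×ˢ I) \ {p : ℕ × ℕ | p.1 = p.2}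

/-- `nor X` is the least `k` such that `X` can be covered by `k` rectangles
`A i ×ˢ B i` with `A i ∩ B i = ∅`. -/
noncomputable def nor (X : Set (ℕ × ℕ)) : ℕ :=
  sInf {k : ℕ | ∃ A B : ℕ → Set ℕ,
    (∀ i < k, A i ∩ B i = ∅) ∧ X ⊆ ⋃ i < k, A i ×ˢ B i}

def Cov (X : Set (ℕ × ℕ)) (k : ℕ) : Prop :=
  ∃ A B : ℕ → Set ℕ, (∀ i < k, A i ∩ B i = ∅) ∧ X ⊆ ⋃ i < k, A i ×ˢ B i

lemma nor_le {X : Set (ℕ × ℕ)} {k : ℕ} (h : Cov X k) : nor X ≤ k := Nat.sInf_le h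

lemma cov_nor {X : Set (ℕ × ℕ)} (h : ∃ k, Cov X k) : Cov X (nor X) :=
  Nat.sInf_mem h

lemma cov_mono {X Y : Set (ℕ × ℕ)} {k : ℕ} (hXY : X ⊆ Y) (h : Cov Y k) : Cov X k := by
  obtain ⟨A, B, hd, hc⟩ := h
  exact ⟨A, B, hd, hXY.trans hc⟩

lemma cov_pad {X : Set (ℕ × ℕ)} {k l : ℕ} (h : Cov X k) (hkl : k ≤ l) : Cov X l := by
  obtain ⟨A, B, hd, hc⟩ := h
  refine ⟨fun i => if i < k then A i else ∅, fun i => if i < k then B i else ∅, ?_, ?_⟩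
  · intro i _
    by_cases hik : i < k <;> simp [hik, hd]
  · intro p hp
    obtain ⟨i, hik, hA, hB⟩ := Set.mem_iUnion₂.mp (hc hp)
    exact Set.mem_iUnion₂.mpr ⟨i, hik.trans_le hkl, ⟨by simp [hik, hA], by simp [hik, hB]⟩⟩

lemma cov_union {X Y : Set (ℕ × ℕ)} {k l : ℕ} (hX : Cov X k) (hY : Cov Y l) :
    Cov (X ∪ Y) (k + l) := by
  obtain ⟨A₁, B₁, hd₁, hc₁⟩ := hX
  obtain ⟨A₂, B₂, hd₂, hc₂⟩ := hY
  refine ⟨fun i => if i < k then A₁ i else A₂ (i - k),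
    fun i => if i < k then B₁ i else B₂ (i - k), ?_, ?_⟩
  · intro i hi
    by_cases hik : i < k
    · simp [hik, hd₁ i hik]
    · have : i - k < l := by omega
      simp [hik, hd₂ _ this]
  · intro p hp
    rcases hp with hp | hp
    · obtain ⟨i, hik, hAB⟩ := Set.mem_iUnion₂.mp (hc₁ hp)
      exact Set.mem_iUnion₂.mpr ⟨i, by omega,
        ⟨by simp [hik, hAB.1], by simp [hik, hAB.2]⟩⟩
    · obtain ⟨j, hjl, hAB⟩ := Set.mem_iUnion₂.mp (hc₂ hp)
      have hnk : ¬ (k + j < k) := by omega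
      have hjk : k + j - k = j := by omega
      exact Set.mem_iUnion₂.mpr ⟨k + j, by omega,
        ⟨by simp [hnk, hjk, hAB.1], by simp [hnk, hjk, hAB.2]⟩⟩

lemma cov_empty : Cov ∅ 0 := ⟨fun _ => ∅, fun _ => ∅, by simp, by simp⟩

lemma cov_singleton {p : ℕ × ℕ} (hp : p.1 ≠ p.2) : Cov {p} 1 := by
  refine ⟨fun _ => {p.1}, fun _ => {p.2}, ?_, ?_⟩
  · intro i _
    simp [Set.eq_empty_iff_forall_notMem, hp]
  · intro q hq
    simp only [Set.mem_singleton_iff] at hq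
    subst hq
    simp

lemma cov_of_finite {X : Set (ℕ × ℕ)} (hX : X.Finite) (hod : ∀ p ∈ X, p.1 ≠ p.2) :
    Cov X X.ncard := by
  refine Set.Finite.induction_on (motive := fun t _ => (∀ p ∈ t, p.1 ≠ p.2) → Cov t t.ncard)
    X hX (fun _ => by simpa using cov_empty) ?_ hod
  intro a s has hs ih hod
  have h1 : Cov ({a} ∪ s) (1 + s.ncard) :=
    cov_union (cov_singleton (hod a (Set.mem_insert a s)))
      (ih fun p hp => hod p (Set.mem_insert_of_mem a hp))
  rw [Set.ncard_insert_of_notMem has hs, Set.insert_eq]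
  rw [Nat.add_comm] at h1
  exact h1

lemma offDiag_ne {S : Set ℕ} {p : ℕ × ℕ} (hp : p ∈ offDiagSq S) : p.1 ≠ p.2 := hp.2

lemma cov_exists_of_sub {S : Set ℕ} (hS : S.Finite) {X : Set (ℕ × ℕ)}
    (hX : X ⊆ offDiagSq S) : ∃ k, Cov X k := by
  have hfin : X.Finite := ((hS.prod hS).subset (fun p hp => (hX hp).1)).subset le_rfl
  exact ⟨X.ncard, cov_of_finite hfin (fun p hp => offDiag_ne (hX hp))⟩

lemma ncard_le_of_cov {S : Set ℕ} {k : ℕ} (h : Cov (offDiagSq S) k) :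
    S.ncard ≤ 2 ^ k := by
  obtain ⟨A, B, hd, hc⟩ := h
  have hinj : Set.InjOn (fun x => {i : Fin k | x ∈ A i.val}) S := by
    intro x hx y hy hxy
    by_contra hne
    have hmem : (x, y) ∈ offDiagSq S := ⟨⟨hx, hy⟩, hne⟩
    obtain ⟨i, hik, hxA, hyB⟩ := Set.mem_iUnion₂.mp (hc hmem)
    replace hxy : {i : Fin k | x ∈ A i.val} = {i : Fin k | y ∈ A i.val} := hxy
    have hix : (⟨i, hik⟩ : Fin k) ∈ {i : Fin k | x ∈ A i.val} := hxA
    have hix' : y ∈ A i := by rw [hxy] at hix; exact hix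
    have : y ∈ A i ∩ B i := ⟨hix', hyB⟩
    rw [hd i hik] at this
    exact this
  calc S.ncard ≤ (Set.univ : Set (Set (Fin k))).ncard :=
        Set.ncard_le_ncard_of_injOn _ (fun a _ => Set.mem_univ _) hinj (Set.finite_univ)
    _ = 2 ^ k := by
        simp [Set.ncard_univ, Nat.card_eq_fintype_card]

/-- The collection of subsets of `D = ⋃ₖ [Iₖ]²` whose traces on the `[Iₖ]²`
have bounded norms is a proper ideal containing all finite subsets of `D`. -/
theorem boundedNorm_is_proper_ideal (I : ℕ → Set ℕ)
    (hfin : ∀ k, (I k).Finite)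
    (hdisj : Pairwise (Function.onFun Disjoint I))
    (hcard : Filter.Tendsto (fun k => (I k).ncard) Filter.atTop Filter.atTop)
    (D : Set (ℕ × ℕ)) (hD : D = ⋃ k, offDiagSq (I k))
    (J : Set (Set (ℕ × ℕ)))
    (hJ : J = {X | X ⊆ D ∧ ∃ m : ℕ, ∀ k, nor (X ∩ offDiagSq (I k)) ≤ m}) :
    (∀ X ∈ J, ∀ Y ⊆ X, Y ∈ J) ∧
    (∀ X ∈ J, ∀ Y ∈ J, X ∪ Y ∈ J) ∧
    (∀ X ⊆ D, X.Finite → X ∈ J) ∧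
    D ∉ J := by
  subst hJ
  have hex : ∀ (X : Set (ℕ × ℕ)) (k : ℕ), ∃ n, Cov (X ∩ offDiagSq (I k)) n :=
    fun X k => cov_exists_of_sub (hfin k) Set.inter_subset_right
  refine ⟨?_, ?_, ?_, ?_⟩
  · rintro X ⟨hXD, m, hm⟩ Y hYX
    refine ⟨hYX.trans hXD, m, fun k => ?_⟩
    exact le_trans
      (nor_le (cov_mono (Set.inter_subset_inter_left _ hYX) (cov_nor (hex X k)))) (hm k)
  · rintro X ⟨hXD, m, hm⟩ Y ⟨hYD, m', hm'⟩
    refine ⟨Set.union_subset hXD hYD, m + m', fun k => ?_⟩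
    rw [Set.union_inter_distrib_right]
    exact le_trans (nor_le (cov_union (cov_nor (hex X k)) (cov_nor (hex Y k))))
      (Nat.add_le_add (hm k) (hm' k))
  · intro X hXD hXf
    refine ⟨hXD, X.ncard, fun k => ?_⟩
    have h1 : Cov (X ∩ offDiagSq (I k)) (X ∩ offDiagSq (I k)).ncard :=
      cov_of_finite (hXf.inter_of_left _) (fun p hp => offDiag_ne hp.2)
    exact le_trans (nor_le h1) (Set.ncard_le_ncard Set.inter_subset_left hXf)
  · rintro ⟨-, m, hm⟩
    obtain ⟨k, hk⟩ := (hcard.eventually_ge_atTop (2 ^ m + 1)).exists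
    have hsub : offDiagSq (I k) ⊆ D := hD ▸ Set.subset_iUnion (fun k => offDiagSq (I k)) k
    have h1 : D ∩ offDiagSq (I k) = offDiagSq (I k) :=
      Set.inter_eq_self_of_subset_right hsub
    have hc : Cov (offDiagSq (I k)) (nor (offDiagSq (I k))) :=
      cov_nor (cov_exists_of_sub (hfin k) subset_rfl)
    have hle : nor (offDiagSq (I k)) ≤ m := h1 ▸ hm k
    have := ncard_le_of_cov (cov_pad hc hle)
    omega
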